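/- Let f be a nonzero multilinear polynomial of degree 3 over ℂ, f = Σ_{σ∈S₃} a_σ x_{σ(1)}x_{σ(2)}x_{σ(3)}, and let d ≥ 2. Then the image of f on M_d(ℂ)³ contains every trace-zero matrix: M_d(ℂ) ∩ ker Tr ⊆ {f(A,B,C) : A,B,C ∈ M_d(ℂ)}. -/

import Mathlib

open Matrix

private lemma aux_scalar (n : ℕ) (D : Matrix (Fin n) (Fin n) ℂ)
    (H : ∀ v : Fin n → ℂ, ∃ c : ℂ, D.mulVec v = c • v) :
    ∃ c : ℂ, D = c • (1 : Matrix (Fin n) (Fin n) ℂ) := by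
  cases n with
  | zero => exact ⟨0, by ext i j; exact i.elim0⟩
  | succ m =>
    choose c hc using fun j => H (Pi.single j 1)
    have hent : ∀ i j : Fin (m+1), D i j = c j * (Pi.single j 1 : Fin (m+1) → ℂ) i := by
      intro i j
      have := congr_fun (hc j) i
      simpa [Matrix.mulVec_single] using this
    have hdiag : ∀ j, D j j = c j := by
      intro j; simpa using hent j j
    have hoff : ∀ i j, i ≠ j → D i j = 0 := by
      intro i j hij
      have := hent i j
      rwa [Pi.single_eq_of_ne hij, mul_zero] at this
    have hconst : ∀ j, c j = c 0 := by
      intro j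
      rcases eq_or_ne j 0 with rfl | hj
      · rfl
      · obtain ⟨e, he⟩ := H (Pi.single j 1 + Pi.single (0 : Fin (m+1)) 1)
        have hj' := congr_fun he j
        have h0' := congr_fun he 0
        have hmv : D.mulVec (Pi.single j 1 + Pi.single (0 : Fin (m+1)) 1)
            = fun i => D i j + D i 0 := by
          rw [Matrix.mulVec_add]
          funext i
          simp [Matrix.mulVec_single]
        rw [hmv] at hj' h0'
        simp only [Pi.smul_apply, Pi.add_apply, smul_eq_mul] at hj' h0'
        rw [Pi.single_eq_same, Pi.single_eq_of_ne hj, hoff j 0 hj, hdiag j] at hj'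
        rw [Pi.single_eq_same, Pi.single_eq_of_ne hj.symm, hoff 0 j hj.symm, hdiag 0] at h0'
        simp at hj' h0'
        rw [hj', h0']
    refine ⟨c 0, ?_⟩
    ext i j
    rcases eq_or_ne i j with rfl | hij
    · simp [hdiag i, hconst i, Matrix.one_apply]
    · simp [hoff i j hij, Matrix.one_apply, hij]

private lemma similar_zero_diag : ∀ (n : ℕ) (D : Matrix (Fin n) (Fin n) ℂ), D.trace = 0 →
    ∃ U V : Matrix (Fin n) (Fin n) ℂ, U * V = 1 ∧ V * U = 1 ∧ ∀ i, (V * D * U) i i = 0 := by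
  intro n
  induction n with
  | zero => exact fun D _ => ⟨1, 1, by simp, by simp, fun i => i.elim0⟩
  | succ m IH =>
    intro D htr
    by_cases H : ∀ v : Fin (m+1) → ℂ, ∃ c : ℂ, D.mulVec v = c • v
    · obtain ⟨c, rfl⟩ := aux_scalar _ D H
      have hc : c = 0 := by
        have h1 : Matrix.trace (c • (1 : Matrix (Fin (m+1)) (Fin (m+1)) ℂ)) = c * (m+1) := by
          simp [Matrix.trace_smul, Matrix.trace_one, mul_comm]
        rw [h1] at htr
        have h2 : ((m : ℂ) + 1) ≠ 0 := Nat.cast_add_one_ne_zero (R := ℂ) m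
        exact (mul_eq_zero.mp htr).resolve_right h2
      exact ⟨1, 1, by simp, by simp, fun i => by simp [hc]⟩
    · push_neg at H
      obtain ⟨v, hv⟩ := H
      classical
      set w := D.mulVec v with hw
      have hv0 : v ≠ 0 := by
        intro h
        exact hv 0 (by simp [h, hw])
      have hli : LinearIndependent ℂ ![v, w] :=
        (LinearIndependent.pair_iff' hv0).mpr (fun a h => hv a h.symm)
      have hvw_ne : v ≠ w := fun h => hv 1 (by rw [one_smul]; exact h.symm)
      have hm1 : (2 : ℕ) ≤ m + 1 := by
        have := hli.fintype_card_le_finrank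
        simpa [Module.finrank_fintype_fun_eq_card] using this
      have h01 : (0 : Fin (m+1)) ≠ 1 := by
        intro h
        have := congr_arg Fin.val h
        simp [Fin.val_one, Nat.mod_eq_of_lt (by omega : 1 < m + 1)] at this
      -- extend {v, w} to a basis with v, w in positions 0, 1
      have hSli : LinearIndependent ℂ ((↑) : ({v, w} : Set (Fin (m+1) → ℂ)) → (Fin (m+1) → ℂ)) := by
        have h := hli.linearIndepOn_id
        have hr : Set.range ![v, w] = ({v, w} : Set (Fin (m+1) → ℂ)) := by
          ext x
          simp [Fin.exists_fin_two]
          tauto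
        rw [hr] at h
        exact h
      obtain ⟨b', hb0, hb1⟩ : ∃ b' : Module.Basis (Fin (m+1)) ℂ (Fin (m+1) → ℂ),
          b' 0 = v ∧ b' 1 = w := by
        set S : Set (Fin (m+1) → ℂ) := {v, w} with hS
        have hvS : v ∈ S := by simp [hS]
        have hwS : w ∈ S := by simp [hS]
        have hSli' : LinearIndepOn ℂ id S := hSli
        have hST : S ⊆ hSli'.extend (Set.subset_univ S) := hSli'.subset_extend _
        set B : Module.Basis (hSli'.extend (Set.subset_univ S)) ℂ (Fin (m+1) → ℂ) :=
          Module.Basis.extend hSli' with hB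
        haveI : Fintype (hSli'.extend (Set.subset_univ S)) := FiniteDimensional.fintypeBasisIndex B
        let e0 := B.indexEquiv (Pi.basisFun ℂ (Fin (m+1)))
        set iv : hSli'.extend (Set.subset_univ S) := ⟨v, hST hvS⟩ with hiv
        set iw : hSli'.extend (Set.subset_univ S) := ⟨w, hST hwS⟩ with hiw
        have hivw : iv ≠ iw := by
          intro h; exact hvw_ne (by simpa [hiv, hiw, Subtype.ext_iff] using h)
        let e1 := e0.trans (Equiv.swap (e0 iv) 0)
        have h1v : e1 iv = 0 := by simp [e1]
        have h1w : e1 iw ≠ 0 := by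
          intro h
          exact hivw (e1.injective (h1v.trans h.symm))
        let e := e1.trans (Equiv.swap (e1 iw) 1)
        have hev : e iv = 0 := by
          simp only [e, Equiv.trans_apply, h1v]
          exact Equiv.swap_apply_of_ne_of_ne (Ne.symm h1w) h01
        have hew : e iw = 1 := by simp [e]
        refine ⟨B.reindex e, ?_, ?_⟩
        · rw [Module.Basis.reindex_apply, show e.symm 0 = iv from e.injective (by simp [hev]),
            hB, Module.Basis.extend_apply_self]
        · rw [Module.Basis.reindex_apply, show e.symm 1 = iw from e.injective (by simp [hew]),
            hB, Module.Basis.extend_apply_self]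
      set P := Pi.basisFun ℂ (Fin (m+1)) with hP
      set U : Matrix (Fin (m+1)) (Fin (m+1)) ℂ := P.toMatrix b' with hU
      set V : Matrix (Fin (m+1)) (Fin (m+1)) ℂ := b'.toMatrix P with hV
      have hUV : U * V = 1 := Module.Basis.toMatrix_mul_toMatrix_flip P b'
      have hVU : V * U = 1 := Module.Basis.toMatrix_mul_toMatrix_flip b' P
      set M : Matrix (Fin (m+1)) (Fin (m+1)) ℂ := V * D * U with hM
      have hUcol : ∀ j, U *ᵥ Pi.single j 1 = b' j := by
        intro j
        funext i
        simp [hU, Matrix.mulVec_single, Module.Basis.toMatrix_apply, hP, Pi.basisFun_repr]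
      have hM00 : M 0 0 = 0 := by
        have key : M *ᵥ Pi.single (0 : Fin (m+1)) 1 = Pi.single (1 : Fin (m+1)) 1 := by
          rw [hM, ← Matrix.mulVec_mulVec, ← Matrix.mulVec_mulVec, hUcol 0, hb0, ← hw, ← hb1,
            ← hUcol 1, Matrix.mulVec_mulVec, hVU, Matrix.one_mulVec]
        have := congr_fun key 0
        rw [Matrix.mulVec_single] at this
        simpa [Pi.single_eq_of_ne h01] using this
      have htrM : M.trace = 0 := by
        rw [hM, Matrix.trace_mul_comm (V * D) U, ← Matrix.mul_assoc, hUV, Matrix.one_mul, htr]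
      -- block reduction
      set eS : Fin 1 ⊕ Fin m ≃ Fin (m+1) := finSumFinEquiv.trans (finCongr (Nat.add_comm 1 m))
        with heS
      have heS0 : eS (Sum.inl 0) = 0 := by
        apply Fin.ext
        simp [heS, finSumFinEquiv]
      set E : Matrix (Fin m) (Fin m) ℂ :=
        M.submatrix (fun i => eS (Sum.inr i)) (fun j => eS (Sum.inr j)) with hE
      have htrE : E.trace = 0 := by
        have hsum : M.trace = ∑ z : Fin 1 ⊕ Fin m, M (eS z) (eS z) := by
          rw [Matrix.trace]
          exact (Fintype.sum_equiv eS _ _ (fun z => rfl)).symm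
        rw [Fintype.sum_sum_type] at hsum
        simp only [Finset.univ_unique, Finset.sum_singleton] at hsum
        rw [show (default : Fin 1) = 0 from rfl, heS0, hM00] at hsum
        have h3 : M.trace = ∑ i : Fin m, E i i := by simpa [hE] using hsum
        rw [Matrix.trace]
        simp only [Matrix.diag]
        rw [← h3, htrM]
      obtain ⟨W, X, hWX, hXW, hdiagE⟩ := IH E htrE
      set L : Matrix (Fin m) (Fin m) ℂ → Matrix (Fin (m+1)) (Fin (m+1)) ℂ :=
        fun Y => (Matrix.fromBlocks 1 0 0 Y).submatrix eS.symm eS.symm with hL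
      have hLmul : ∀ Y Z : Matrix (Fin m) (Fin m) ℂ, L Y * L Z = L (Y*Z) := by
        intro Y Z
        rw [hL]
        simp only []
        rw [Matrix.submatrix_mul_equiv, Matrix.fromBlocks_multiply]
        simp
      have hL1 : L 1 = 1 := by
        rw [hL]
        simp only [Matrix.fromBlocks_one]
        exact Matrix.submatrix_one_equiv eS.symm
      have hdiagM : ∀ i, (L X * M * L W) i i = 0 := by
        intro i
        have hMsub : M = (M.submatrix eS eS).submatrix eS.symm eS.symm := by
          rw [Matrix.submatrix_submatrix]
          simp
        have key : L X * M * L W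
            = ((Matrix.fromBlocks 1 0 0 X) * M.submatrix eS eS
                * (Matrix.fromBlocks 1 0 0 W)).submatrix eS.symm eS.symm := by
          conv_lhs => rw [hMsub, hL]
          simp only []
          rw [Matrix.submatrix_mul_equiv, Matrix.submatrix_mul_equiv]
        rw [key]
        rw [show M.submatrix eS eS = Matrix.fromBlocks (M.submatrix eS eS).toBlocks₁₁
            (M.submatrix eS eS).toBlocks₁₂ (M.submatrix eS eS).toBlocks₂₁
            (M.submatrix eS eS).toBlocks₂₂ from (Matrix.fromBlocks_toBlocks _).symm]
        rw [Matrix.fromBlocks_multiply, Matrix.fromBlocks_multiply]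
        rcases h : eS.symm i with a | k
        · have ha : a = 0 := Subsingleton.elim _ _
          subst ha
          have h4 : i = eS (Sum.inl 0) := by rw [← h]; simp
          simp only [Matrix.submatrix_apply, h, Matrix.fromBlocks_apply₁₁]
          simp [Matrix.toBlocks₁₁, heS0, ← h4, hM00]
        · simp only [Matrix.submatrix_apply, h, Matrix.fromBlocks_apply₂₂]
          have hEblk : (M.submatrix eS eS).toBlocks₂₂ = E := rfl
          simp only [Matrix.zero_mul, Matrix.mul_zero, zero_add, add_zero,
            Matrix.one_mul, Matrix.mul_one, hEblk]
          exact hdiagE k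
      refine ⟨U * L W, L X * V, ?_, ?_, ?_⟩
      · rw [Matrix.mul_assoc U, ← Matrix.mul_assoc (L W), hLmul, hWX, hL1, Matrix.one_mul, hUV]
      · rw [Matrix.mul_assoc (L X), ← Matrix.mul_assoc V, hVU, Matrix.one_mul, hLmul, hXW, hL1]
      · intro i
        have : L X * V * D * (U * L W) = L X * M * L W := by
          rw [hM]
          noncomm_ring
        rw [this]
        exact hdiagM i


set_option maxHeartbeats 2000000 in
/-- Mesyan: the image on `M_d(ℂ)` of a nonzero multilinear degree-3
polynomial contains every trace-zero matrix. -/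
theorem image_contains_traceless (d : ℕ) (hd : 2 ≤ d)
    (a123 a132 a213 a231 a312 a321 : ℂ)
    (hne : ¬(a123 = 0 ∧ a132 = 0 ∧ a213 = 0 ∧ a231 = 0 ∧ a312 = 0 ∧ a321 = 0)) :
    ∀ D : Matrix (Fin d) (Fin d) ℂ, Matrix.trace D = 0 →
      ∃ A B C : Matrix (Fin d) (Fin d) ℂ,
        a123 • (A * B * C) + a132 • (A * C * B) + a213 • (B * A * C) +
          a231 • (B * C * A) + a312 • (C * A * B) + a321 • (C * B * A) = D := by
  intro D hD
  by_cases hs : a123 + a132 + a213 + a231 + a312 + a321 = 0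
  swap
  · -- nonzero sum : take A = s⁻¹ • D, B = C = 1
    refine ⟨(a123 + a132 + a213 + a231 + a312 + a321)⁻¹ • D, 1, 1, ?_⟩
    simp only [Matrix.mul_one, Matrix.one_mul, smul_smul]
    simp only [← add_smul]
    rw [show a123 * (a123 + a132 + a213 + a231 + a312 + a321)⁻¹
        + a132 * (a123 + a132 + a213 + a231 + a312 + a321)⁻¹
        + a213 * (a123 + a132 + a213 + a231 + a312 + a321)⁻¹
        + a231 * (a123 + a132 + a213 + a231 + a312 + a321)⁻¹
        + a312 * (a123 + a132 + a213 + a231 + a312 + a321)⁻¹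
        + a321 * (a123 + a132 + a213 + a231 + a312 + a321)⁻¹ = 1 from by
      field_simp, one_smul]
  · -- sum = 0 : conjugate to zero diagonal
    obtain ⟨U, V, hUV, hVU, hdiag⟩ := similar_zero_diag d D hD
    suffices h : ∃ A B C : Matrix (Fin d) (Fin d) ℂ,
        a123 • (A * B * C) + a132 • (A * C * B) + a213 • (B * A * C) +
          a231 • (B * C * A) + a312 • (C * A * B) + a321 • (C * B * A) = V * D * U by
      obtain ⟨A, B, C, hf⟩ := h
      refine ⟨U*A*V, U*B*V, U*C*V, ?_⟩
      have hc : ∀ X Y : Matrix (Fin d) (Fin d) ℂ, (U*X*V) * (U*Y*V) = U*(X*Y)*V := by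
        intro X Y
        have h1 : (U*X*V) * (U*Y*V) = U*X*(V*U)*(Y*V) := by noncomm_ring
        rw [h1, hVU]
        noncomm_ring
      have hc3 : ∀ X Y W : Matrix (Fin d) (Fin d) ℂ,
          (U*X*V) * (U*Y*V) * (U*W*V) = U*(X*Y*W)*V := fun X Y W => by rw [hc, hc]
      rw [hc3, hc3, hc3, hc3, hc3, hc3]
      have hpull : ∀ (a : ℂ) (X : Matrix (Fin d) (Fin d) ℂ),
          a • (U*(X)*V) = U * (a • X) * V := by
        intro a X
        rw [Matrix.mul_smul, Matrix.smul_mul]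
      rw [hpull, hpull, hpull, hpull, hpull, hpull]
      simp only [← Matrix.add_mul, ← Matrix.mul_add]
      rw [hf]
      rw [show U * (V * D * U) * V = (U*V) * D * (U*V) from by noncomm_ring, hUV,
        Matrix.one_mul, Matrix.mul_one]
    set Z := V * D * U with hZ
    -- generic construction : A, B diagonal, C arbitrary
    have build : ∀ (x y : Fin d → ℂ),
        (∀ i j : Fin d, i ≠ j →
          a123 * (x i * y i) + a132 * (x i * y j) + a213 * (x i * y i) + a231 * (x j * y i)
            + a312 * (x j * y j) + a321 * (x j * y j) ≠ 0) →
        ∃ A B C : Matrix (Fin d) (Fin d) ℂ,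
          a123 • (A * B * C) + a132 • (A * C * B) + a213 • (B * A * C) +
            a231 • (B * C * A) + a312 • (C * A * B) + a321 • (C * B * A) = Z := by
      intro x y hg
      refine ⟨diagonal x, diagonal y, Matrix.of (fun i j => if i = j then 0 else
        Z i j / (a123 * (x i * y i) + a132 * (x i * y j) + a213 * (x i * y i)
          + a231 * (x j * y i) + a312 * (x j * y j) + a321 * (x j * y j))), ?_⟩
      ext i j
      simp only [Matrix.add_apply, Matrix.smul_apply, smul_eq_mul,
        Matrix.diagonal_mul_diagonal, Matrix.diagonal_mul, Matrix.mul_diagonal,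
        Matrix.of_apply, Pi.mul_apply]
      rcases eq_or_ne i j with rfl | hij
      · rw [if_pos rfl]
        rw [hdiag i]
        ring
      · rw [if_neg hij]
        have hgne := hg i j hij
        generalize Z i j = z
        obtain ⟨q, hq⟩ : ∃ q, q = z / (a123 * (x i * y i) + a132 * (x i * y j) + a213 * (x i * y i)
            + a231 * (x j * y i) + a312 * (x j * y j) + a321 * (x j * y j)) := ⟨_, rfl⟩
        rw [← hq]
        have hz : z = q * (a123 * (x i * y i) + a132 * (x i * y j) + a213 * (x i * y i)
            + a231 * (x j * y i) + a312 * (x j * y j) + a321 * (x j * y j)) := by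
          rw [hq, div_mul_cancel₀ _ hgne]
        rw [hz]
        ring
    by_cases hα : a123 + a213 + a231 = 0
    · by_cases hγ : a123 + a213 + a132 = 0
      · by_cases hp : a123 + a213 = 0
        · -- case B : f = u[A,B]C + vC[A,B]
          have h213 : a213 = -a123 := by linear_combination hp
          have h231 : a231 = 0 := by linear_combination hα - hp
          have h132 : a132 = 0 := by linear_combination hγ - hp
          have h321 : a321 = -a312 := by linear_combination hs - hα - hγ + hp
          obtain ⟨c, hc⟩ : ∃ c : Fin d → ℂ, ∀ i j : Fin d, i ≠ j →
              a123 * c j + a312 * c i ≠ 0 := by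
            by_cases huv : a123 + a312 = 0
            · have hu : a123 ≠ 0 := by
                intro h0
                exact hne ⟨h0, h132, by rw [h213, h0, neg_zero], h231,
                  by linear_combination huv - h0, by rw [h321]; simp; linear_combination huv - h0⟩
              refine ⟨fun i => (i : ℕ), fun i j hij => ?_⟩
              have hcij : ((j : ℕ) : ℂ) ≠ ((i : ℕ) : ℂ) := by
                intro h
                exact hij (Fin.ext (Nat.cast_injective h)).symm
              have : a123 * ((j:ℕ):ℂ) + a312 * ((i:ℕ):ℂ)
                  = a123 * (((j:ℕ):ℂ) - ((i:ℕ):ℂ)) := by linear_combination ((i:ℕ):ℂ) * huv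
              rw [this]
              exact mul_ne_zero hu (sub_ne_zero.mpr hcij)
            · exact ⟨fun _ => 1, fun i j _ => by simpa using huv⟩
          have hpd : ∀ i j : Fin d, i ≠ j → ((i:ℕ):ℂ) - ((j:ℕ):ℂ) ≠ 0 := by
            intro i j hij
            refine sub_ne_zero.mpr ?_
            intro h
            exact hij (Fin.ext (Nat.cast_injective h))
          refine ⟨diagonal (fun i : Fin d => ((i:ℕ):ℂ)),
            Matrix.of (fun i j => if i = j then 0 else
              Z i j / ((((i:ℕ):ℂ) - ((j:ℕ):ℂ)) * (a123 * c j + a312 * c i))),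
            diagonal c, ?_⟩
          ext i j
          simp only [Matrix.add_apply, Matrix.smul_apply, smul_eq_mul,
            Matrix.diagonal_mul_diagonal, Matrix.diagonal_mul, Matrix.mul_diagonal,
            Matrix.of_apply, Pi.mul_apply]
          rcases eq_or_ne i j with rfl | hij
          · rw [if_pos rfl]
            rw [hdiag i]
            ring
          · rw [if_neg hij]
            have hne1 := hpd i j hij
            have hne2 := hc i j hij
            rw [h213, h231, h132, h321]
            field_simp
            ring
        · -- case A3 : x = y = cast
          apply build (fun i => ((i:ℕ):ℂ)) (fun i => ((i:ℕ):ℂ))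
          intro i j hij
          have hΔ : ((i:ℕ):ℂ) - ((j:ℕ):ℂ) ≠ 0 := by
            refine sub_ne_zero.mpr ?_
            intro h
            exact hij (Fin.ext (Nat.cast_injective h))
          have key : a123 * (((i:ℕ):ℂ) * ((i:ℕ):ℂ)) + a132 * (((i:ℕ):ℂ) * ((j:ℕ):ℂ))
              + a213 * (((i:ℕ):ℂ) * ((i:ℕ):ℂ)) + a231 * (((j:ℕ):ℂ) * ((i:ℕ):ℂ))
              + a312 * (((j:ℕ):ℂ) * ((j:ℕ):ℂ)) + a321 * (((j:ℕ):ℂ) * ((j:ℕ):ℂ))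
              = (a123 + a213) * ((((i:ℕ):ℂ) - ((j:ℕ):ℂ)) * (((i:ℕ):ℂ) - ((j:ℕ):ℂ))) := by
            linear_combination (((i:ℕ):ℂ) * ((j:ℕ):ℂ)) * hγ + (((i:ℕ):ℂ) * ((j:ℕ):ℂ)) * hα
              + (((j:ℕ):ℂ) * ((j:ℕ):ℂ)) * hs - (((j:ℕ):ℂ) * ((j:ℕ):ℂ)) * hγ
              - (((j:ℕ):ℂ) * ((j:ℕ):ℂ)) * hα
          rw [key]
          exact mul_ne_zero hp (mul_ne_zero hΔ hΔ)
      · -- case A2 : y = 1, x = cast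
        apply build (fun i => ((i:ℕ):ℂ)) (fun _ => 1)
        intro i j hij
        have hΔ : ((i:ℕ):ℂ) - ((j:ℕ):ℂ) ≠ 0 := by
          refine sub_ne_zero.mpr ?_
          intro h
          exact hij (Fin.ext (Nat.cast_injective h))
        have key : a123 * (((i:ℕ):ℂ) * 1) + a132 * (((i:ℕ):ℂ) * 1)
            + a213 * (((i:ℕ):ℂ) * 1) + a231 * (((j:ℕ):ℂ) * 1)
            + a312 * (((j:ℕ):ℂ) * 1) + a321 * (((j:ℕ):ℂ) * 1)
            = (a123 + a213 + a132) * (((i:ℕ):ℂ) - ((j:ℕ):ℂ)) := by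
          linear_combination ((j:ℕ):ℂ) * hs
        rw [key]
        exact mul_ne_zero hγ hΔ
    · -- case A1 : x = 1, y = cast
      apply build (fun _ => 1) (fun i => ((i:ℕ):ℂ))
      intro i j hij
      have hΔ : ((i:ℕ):ℂ) - ((j:ℕ):ℂ) ≠ 0 := by
        refine sub_ne_zero.mpr ?_
        intro h
        exact hij (Fin.ext (Nat.cast_injective h))
      have key : a123 * (1 * ((i:ℕ):ℂ)) + a132 * (1 * ((j:ℕ):ℂ))
          + a213 * (1 * ((i:ℕ):ℂ)) + a231 * (1 * ((i:ℕ):ℂ))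
          + a312 * (1 * ((j:ℕ):ℂ)) + a321 * (1 * ((j:ℕ):ℂ))
          = (a123 + a213 + a231) * (((i:ℕ):ℂ) - ((j:ℕ):ℂ)) := by
        linear_combination ((j:ℕ):ℂ) * hs
      rw [key]
      exact mul_ne_zero hα hΔ
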